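/- arXiv:1210.6326 — 2 statements merged into one kernel-verified Lean document; each statement's English description precedes it below -/
import Mathlib

section
/- Let $V = V_1 + V_2$ with $V_1 \in L^\infty(\mathbb{R}^3)$ compactly supported and $\|V_2\|_{\mathcal{K}} \leq \epsilon$ (global Kato norm). Then for all $\lambda, \lambda_0 \geq 0$ with $|\sqrt{\lambda} - \sqrt{\lambda_0}| \leq \epsilon \|V_1\|_{L^1}^{-1}$, the kernel of $B_{\lambda,\lambda_0} = V(R_0^+(\lambda) - R_0^+(\lambda_0))$ satisfies the pointwise bound $|B_{\lambda,\lambda_0}(x,y)| \leq \frac{\epsilon |V_1(x)|}{4\pi \|V_1\|_{L^1}} + \frac{|V_2(x)|}{2\pi |x-y|}$, and the right-hand side $B(x,y)$ satisfies $\sup_y \int |B(x,y)|\, dx \leq \epsilon$ (up to a constant). -/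
noncomputable section
open MeasureTheory Complex
open scoped ENNReal NNReal

lemma exp_I_sub_le (a b : ℝ) : ‖Complex.exp (I * a) - Complex.exp (I * b)‖ ≤ |a - b| := by
  have hd : ∀ t : ℝ, HasDerivAt (fun t : ℝ => Complex.exp (I * t))
      (Complex.exp (I * t) * I) t := by
    intro t
    have : HasDerivAt (fun z : ℂ => Complex.exp (I * z)) (Complex.exp (I * t) * I) (t : ℂ) :=
      ((hasDerivAt_id (t:ℂ)).const_mul I).cexp.congr_deriv (by simp)
    exact this.comp_ofReal
  have := Convex.norm_image_sub_le_of_norm_hasDerivWithin_le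
    (f := fun t : ℝ => Complex.exp (I * t)) (C := 1)
    (fun t _ => (hd t).hasDerivWithinAt)
    (fun t _ => by simp [Complex.norm_exp]) convex_univ (Set.mem_univ b) (Set.mem_univ a)
  simpa [abs_sub_comm] using this

lemma exp_I_sub_le_two (a b : ℝ) : ‖Complex.exp (I * a) - Complex.exp (I * b)‖ ≤ 2 := by
  calc ‖Complex.exp (I * a) - Complex.exp (I * b)‖
      ≤ ‖Complex.exp (I * a)‖ + ‖Complex.exp (I * b)‖ := norm_sub_le _ _
    _ ≤ 2 := by simp [Complex.norm_exp]; norm_num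

/-- Kernel bound for `B_{λ,λ₀} = V(R₀⁺(λ) - R₀⁺(λ₀))` with `V = V₁ + V₂`,
`V₁ ∈ L^∞` compactly supported and `‖V₂‖_𝒦 ≤ ε`: for `|√λ - √λ₀| ≤ ε ‖V₁‖_{L¹}⁻¹` the
kernel is pointwise bounded by `ε|V₁(x)|/(4π‖V₁‖₁) + |V₂(x)|/(2π|x-y|)`, whose columns
have `L¹_x` norm at most a constant times `ε`. -/
theorem resolvent_difference_kernel_bound (V₁ V₂ : EuclideanSpace ℝ (Fin 3) → ℝ)
    (hV₁m : Measurable V₁) (hV₁i : Integrable V₁) (hV₁pos : 0 < ∫ x, |V₁ x|)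
    (hV₁b : ∃ M, ∀ x, |V₁ x| ≤ M) (hV₁s : HasCompactSupport V₁)
    (ε : ℝ) (hε : 0 < ε)
    (hV₂K : ∀ x : EuclideanSpace ℝ (Fin 3),
      ∫⁻ y, (‖V₂ y‖₊ : ℝ≥0∞) / ENNReal.ofReal ‖x - y‖ ≤ ENNReal.ofReal ε)
    (lam lam₀ : ℝ) (hlam : 0 ≤ lam) (hlam₀ : 0 ≤ lam₀)
    (hclose : |Real.sqrt lam - Real.sqrt lam₀| ≤ ε / ∫ x, |V₁ x|) :
    (∀ x y : EuclideanSpace ℝ (Fin 3), x ≠ y →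
      ‖((V₁ x + V₂ x : ℝ) : ℂ) *
          (Complex.exp (Complex.I * (Real.sqrt lam * ‖x - y‖ : ℝ)) -
            Complex.exp (Complex.I * (Real.sqrt lam₀ * ‖x - y‖ : ℝ))) /
          ((4 * Real.pi * ‖x - y‖ : ℝ) : ℂ)‖
        ≤ ε * |V₁ x| / (4 * Real.pi * ∫ z, |V₁ z|) +
            |V₂ x| / (2 * Real.pi * ‖x - y‖)) ∧
    ∃ C : ℝ, 0 < C ∧ ∀ y : EuclideanSpace ℝ (Fin 3),
      ∫⁻ x, ENNReal.ofReal (ε * |V₁ x| / (4 * Real.pi * ∫ z, |V₁ z|) +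
          |V₂ x| / (2 * Real.pi * ‖x - y‖))
        ≤ ENNReal.ofReal (C * ε) := by
  set Iv : ℝ := ∫ z, |V₁ z| with hIv
  have hπ : (0:ℝ) < Real.pi := Real.pi_pos
  constructor
  · intro x y hxy
    set r : ℝ := ‖x - y‖ with hr
    have hrpos : 0 < r := by
      simpa [hr] using norm_sub_pos_iff.mpr hxy
    set E : ℂ := Complex.exp (Complex.I * (Real.sqrt lam * r : ℝ)) -
        Complex.exp (Complex.I * (Real.sqrt lam₀ * r : ℝ)) with hE
    have hE1 : ‖E‖ ≤ ε / Iv * r := by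
      calc ‖E‖ ≤ |Real.sqrt lam * r - Real.sqrt lam₀ * r| := exp_I_sub_le _ _
        _ = |Real.sqrt lam - Real.sqrt lam₀| * r := by
            rw [← sub_mul, abs_mul, abs_of_pos hrpos]
        _ ≤ ε / Iv * r := by
            exact mul_le_mul_of_nonneg_right hclose hrpos.le
    have hE2 : ‖E‖ ≤ 2 := exp_I_sub_le_two _ _
    have hden : (0:ℝ) < 4 * Real.pi * r := by positivity
    have hnorm : ‖((V₁ x + V₂ x : ℝ) : ℂ) * E / ((4 * Real.pi * r : ℝ) : ℂ)‖
        = |V₁ x + V₂ x| * ‖E‖ / (4 * Real.pi * r) := by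
      rw [norm_div, norm_mul, Complex.norm_real, Complex.norm_real,
        Real.norm_eq_abs, Real.norm_eq_abs, abs_of_pos hden]
    rw [hnorm]
    have hsplit : |V₁ x + V₂ x| * ‖E‖ / (4 * Real.pi * r)
        ≤ |V₁ x| * ‖E‖ / (4 * Real.pi * r) + |V₂ x| * ‖E‖ / (4 * Real.pi * r) := by
      rw [← add_div, ← add_mul]
      have h1 := mul_le_mul_of_nonneg_right (abs_add_le (V₁ x) (V₂ x)) (norm_nonneg E)
      exact div_le_div_of_nonneg_right h1 hden.le |>.trans_eq rfl
    refine hsplit.trans (add_le_add ?_ ?_)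
    · rw [div_le_div_iff₀ hden (by positivity)]
      have hEI : ‖E‖ * Iv ≤ ε * r := by
        have := mul_le_mul_of_nonneg_right hE1 hV₁pos.le
        calc ‖E‖ * Iv ≤ ε / Iv * r * Iv := this
          _ = ε * r := by field_simp
      nlinarith [mul_le_mul_of_nonneg_left hEI (mul_nonneg (by positivity : (0:ℝ) ≤ 4 * Real.pi) (abs_nonneg (V₁ x)))]
    · rw [div_le_div_iff₀ hden (by positivity)]
      nlinarith [mul_le_mul_of_nonneg_left hE2 (mul_nonneg (mul_nonneg (by positivity : (0:ℝ) ≤ 2 * Real.pi) hrpos.le) (abs_nonneg (V₂ x)))]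
  · refine ⟨1, one_pos, fun y => ?_⟩
    have hf_meas : Measurable fun x => ENNReal.ofReal (ε * |V₁ x| / (4 * Real.pi * Iv)) := by
      exact (((hV₁m.abs.const_mul ε).div_const _)).ennreal_ofReal
    have hg_nonneg : ∀ x : EuclideanSpace ℝ (Fin 3), 0 ≤ |V₂ x| / (2 * Real.pi * ‖x - y‖) := by
      intro x; positivity
    have hstep : ∀ x : EuclideanSpace ℝ (Fin 3),
        ENNReal.ofReal (ε * |V₁ x| / (4 * Real.pi * Iv) + |V₂ x| / (2 * Real.pi * ‖x - y‖))
        = ENNReal.ofReal (ε * |V₁ x| / (4 * Real.pi * Iv))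
          + ENNReal.ofReal (|V₂ x| / (2 * Real.pi * ‖x - y‖)) := by
      intro x
      exact ENNReal.ofReal_add (by positivity) (hg_nonneg x)
    calc ∫⁻ x, ENNReal.ofReal (ε * |V₁ x| / (4 * Real.pi * Iv) +
            |V₂ x| / (2 * Real.pi * ‖x - y‖))
        = ∫⁻ x, (ENNReal.ofReal (ε * |V₁ x| / (4 * Real.pi * Iv))
            + ENNReal.ofReal (|V₂ x| / (2 * Real.pi * ‖x - y‖))) := by
          simp_rw [hstep]
      _ = (∫⁻ x, ENNReal.ofReal (ε * |V₁ x| / (4 * Real.pi * Iv)))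
            + ∫⁻ x, ENNReal.ofReal (|V₂ x| / (2 * Real.pi * ‖x - y‖)) :=
          lintegral_add_left hf_meas _
      _ ≤ ENNReal.ofReal (ε / (4 * Real.pi)) + ENNReal.ofReal (ε / (2 * Real.pi)) := by
          gcongr
          · -- V₁ term
            have h1 : ∀ x : EuclideanSpace ℝ (Fin 3),
                ENNReal.ofReal (ε * |V₁ x| / (4 * Real.pi * Iv))
                = ENNReal.ofReal (ε / (4 * Real.pi * Iv)) * ENNReal.ofReal |V₁ x| := by
              intro x
              rw [← ENNReal.ofReal_mul (by positivity)]
              ring_nf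
            simp_rw [h1]
            rw [lintegral_const_mul' _ _ ENNReal.ofReal_ne_top]
            have h2 : ∫⁻ x, ENNReal.ofReal |V₁ x| = ENNReal.ofReal Iv := by
              rw [hIv, ← ofReal_integral_eq_lintegral_ofReal hV₁i.abs
                (Filter.Eventually.of_forall fun x => abs_nonneg _)]
            rw [h2, ← ENNReal.ofReal_mul (by positivity)]
            refine le_of_eq (congrArg _ ?_)
            field_simp
          · -- V₂ term
            have hbd : ∀ x : EuclideanSpace ℝ (Fin 3),
                ENNReal.ofReal (|V₂ x| / (2 * Real.pi * ‖x - y‖))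
                ≤ ENNReal.ofReal (1 / (2 * Real.pi)) *
                    ((‖V₂ x‖₊ : ℝ≥0∞) / ENNReal.ofReal ‖y - x‖) := by
              intro x
              rcases eq_or_lt_of_le (norm_nonneg (x - y)) with h0 | h0
              · rw [← h0]
                simp
              · have heq : |V₂ x| / (2 * Real.pi * ‖x - y‖)
                    = (1 / (2 * Real.pi)) * (|V₂ x| / ‖x - y‖) := by
                  field_simp
                rw [heq, ENNReal.ofReal_mul (by positivity),
                  ENNReal.ofReal_div_of_pos h0]
                rw [norm_sub_rev y x]
                apply mul_le_mul_right
                apply ENNReal.div_le_div_right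
                rw [← Real.norm_eq_abs, ofReal_norm, enorm_eq_nnnorm]
            calc ∫⁻ x, ENNReal.ofReal (|V₂ x| / (2 * Real.pi * ‖x - y‖))
                ≤ ∫⁻ x, ENNReal.ofReal (1 / (2 * Real.pi)) *
                    ((‖V₂ x‖₊ : ℝ≥0∞) / ENNReal.ofReal ‖y - x‖) :=
                  lintegral_mono hbd
              _ = ENNReal.ofReal (1 / (2 * Real.pi)) *
                    ∫⁻ x, (‖V₂ x‖₊ : ℝ≥0∞) / ENNReal.ofReal ‖y - x‖ :=
                  lintegral_const_mul' _ _ ENNReal.ofReal_ne_top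
              _ ≤ ENNReal.ofReal (1 / (2 * Real.pi)) * ENNReal.ofReal ε :=
                  mul_le_mul_right (hV₂K y) _
              _ = ENNReal.ofReal (ε / (2 * Real.pi)) := by
                  rw [← ENNReal.ofReal_mul (by positivity)]
                  ring_nf
      _ ≤ ENNReal.ofReal (1 * ε) := by
          rw [← ENNReal.ofReal_add (by positivity) (by positivity)]
          apply ENNReal.ofReal_le_ofReal
          have hπ3 : (3:ℝ) < Real.pi := Real.pi_gt_three
          rw [div_add_div _ _ (by positivity) (by positivity), one_mul]
          rw [div_le_iff₀ (by positivity)]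
          nlinarith [mul_pos (mul_pos hπ hε) (by linarith : (0:ℝ) < 4 * Real.pi - 3)]
end
end

section
/- Suppose $\lambda_j < 0$, $\psi_j \in L^2(\mathbb{R}^3)$ solves $\psi_j = -(-\Delta - \lambda_j)^{-1}(V\psi_j)$, where $V = V_1 + V_2$ with $V_1$ bounded and compactly supported, $\|V_2\|_{\mathcal{K}} \leq 1$, and $e^{\epsilon|\cdot|}V_2 \in L^{6,2}$ for some small $\epsilon \in (0, \sqrt{-\lambda_j})$. If the operator $e^{\epsilon|\cdot|} R_0(\lambda_j) V_2 e^{-\epsilon|\cdot|}$ has $L^\infty \to L^\infty$ norm strictly less than $1$, then $e^{\epsilon|x|}\psi_j \in L^\infty$, i.e., $\psi_j$ decays exponentially; in particular $\psi_j \in L^p$ for all $1 \leq p \leq \infty$. -/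
noncomputable section
open MeasureTheory Complex
open scoped ENNReal NNReal

/-- The Lorentz `L^{p,q}` quasinorm (finite exponents). -/
def lorentzNorm {X : Type*} [MeasurableSpace X] (p q : ℝ) (μ : Measure X)
    (f : X → ℂ) : ℝ≥0∞ :=
  ENNReal.ofReal p ^ (1 / q) *
    (∫⁻ t in Set.Ioi (0 : ℝ),
        (ENNReal.ofReal t * μ {x | ENNReal.ofReal t ≤ (‖f x‖₊ : ℝ≥0∞)} ^ (1 / p)) ^ q /
          ENNReal.ofReal t) ^ (1 / q)

/-- The kernel of the free resolvent `R₀(λⱼ)` for `λⱼ < 0`. -/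
def negKernel (lamj : ℝ) (x y : EuclideanSpace ℝ (Fin 3)) : ℝ :=
  Real.exp (-(Real.sqrt (-lamj)) * ‖x - y‖) / (4 * Real.pi * ‖x - y‖)


section Helpers

open Metric

local notation "X3" => EuclideanSpace ℝ (Fin 3)

lemma vol_cball (x : X3) {r : ℝ} (hr : 0 ≤ r) :
    volume (closedBall x r) = ENNReal.ofReal (r ^ 3) * volume (ball (0:X3) 1) := by
  rw [Measure.addHaar_closedBall volume x hr, finrank_euclideanSpace]
  norm_num

lemma ball_lintegral (x : X3) (ρ : ℝ) :
    ∫⁻ y in ball x ρ, ENNReal.ofReal (1 / ‖x - y‖ ^ 2) ∂volume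
      ≤ 8 * ENNReal.ofReal ρ * volume (ball (0:X3) 1) := by
  rcases le_or_gt ρ 0 with hρ | hρ
  · rw [ball_eq_empty.2 hρ]; simp
  set v := volume (ball (0:X3) 1) with hv
  set r : ℕ → ℝ := fun k => ρ * (1/2)^k with hrdef
  have hrpos : ∀ k, 0 < r k := fun k => by positivity
  set A : ℕ → Set X3 := fun k => closedBall x (r k) \ closedBall x (r (k+1)) with hA
  have cover : ball x ρ ⊆ {x} ∪ ⋃ k, A k := by
    intro y hy
    by_cases hxy : y = x
    · exact Or.inl hxy
    · right
      have hd0 : 0 < dist y x := dist_pos.2 hxy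
      have hdρ : dist y x < ρ := mem_ball.1 hy
      set d := dist y x with hd
      have h1 : (1:ℝ) ≤ ρ / d := (one_le_div hd0).2 hdρ.le
      set k := ⌊Real.logb 2 (ρ/d)⌋₊ with hk
      have hlogb0 : 0 ≤ Real.logb 2 (ρ/d) := Real.logb_nonneg (by norm_num) h1
      have hk1 : (k:ℝ) ≤ Real.logb 2 (ρ/d) := Nat.floor_le hlogb0
      have hk2 : Real.logb 2 (ρ/d) < (k:ℝ) + 1 := Nat.lt_floor_add_one _
      have hrd : (0:ℝ) < ρ / d := by positivity
      have e1 : (2:ℝ)^(k:ℝ) ≤ ρ / d := by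
        calc (2:ℝ)^(k:ℝ) ≤ (2:ℝ)^(Real.logb 2 (ρ/d)) :=
              Real.rpow_le_rpow_of_exponent_le (by norm_num) hk1
        _ = ρ / d := Real.rpow_logb (by norm_num) (by norm_num) hrd
      have e2 : ρ / d < (2:ℝ)^((k:ℝ)+1) := by
        calc ρ / d = (2:ℝ)^(Real.logb 2 (ρ/d)) := (Real.rpow_logb (by norm_num) (by norm_num) hrd).symm
        _ < (2:ℝ)^((k:ℝ)+1) := Real.rpow_lt_rpow_of_exponent_lt (by norm_num) hk2
      have h2k : (2:ℝ)^(k:ℝ) = (2:ℝ)^(k:ℕ) := by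
        rw [Real.rpow_natCast]
      have hp : (0:ℝ) < 2^k := by positivity
      have key1 : d ≤ ρ * ((1:ℝ)/2)^k := by
        rw [div_pow, one_pow, mul_one_div, le_div_iff₀ hp]
        have e1' : d * (2:ℝ)^(k:ℕ) ≤ ρ := by
          rw [← h2k]
          calc d * (2:ℝ)^(k:ℝ) ≤ d * (ρ / d) := by
                exact mul_le_mul_of_nonneg_left e1 hd0.le
          _ = ρ := by field_simp
        exact e1'
      have key2 : ρ * ((1:ℝ)/2)^(k+1) < d := by
        have e2' : ρ / d < (2:ℝ)^(k+1:ℕ) := by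
          have hc : ((k:ℝ)+1) = ((k+1 : ℕ) : ℝ) := by push_cast; ring
          rw [hc, Real.rpow_natCast] at e2; exact e2
        have hp1 : (0:ℝ) < 2^(k+1) := by positivity
        rw [div_pow, one_pow, mul_one_div, div_lt_iff₀ hp1]
        rw [div_lt_iff₀ hd0] at e2'
        linarith [e2']
      exact Set.mem_iUnion.2 ⟨k, (Set.mem_diff y).2 ⟨mem_closedBall.mpr key1,
        fun hc => absurd (mem_closedBall.mp hc) (not_le.2 key2)⟩⟩
  calc ∫⁻ y in ball x ρ, ENNReal.ofReal (1 / ‖x - y‖ ^ 2) ∂volume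
      ≤ ∫⁻ y in {x} ∪ ⋃ k, A k, ENNReal.ofReal (1 / ‖x - y‖ ^ 2) ∂volume :=
        lintegral_mono_set cover
    _ ≤ (∫⁻ y in {x}, ENNReal.ofReal (1 / ‖x - y‖ ^ 2) ∂volume)
        + ∫⁻ y in ⋃ k, A k, ENNReal.ofReal (1 / ‖x - y‖ ^ 2) ∂volume :=
        lintegral_union_le _ _ _
    _ ≤ 0 + ∑' k, ∫⁻ y in A k, ENNReal.ofReal (1 / ‖x - y‖ ^ 2) ∂volume := by
        gcongr
        · rw [setLIntegral_measure_zero _ _ (measure_singleton x)]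
        · exact lintegral_iUnion_le _ _
    _ ≤ ∑' k, ENNReal.ofReal (4 * ρ * (1/2)^k) * v := by
        rw [zero_add]
        gcongr with k
        have hstep : ∫⁻ y in A k, ENNReal.ofReal (1 / ‖x - y‖ ^ 2) ∂volume
            ≤ ∫⁻ _ in A k, ENNReal.ofReal (1 / (r (k+1)) ^ 2) ∂volume := by
          refine setLIntegral_mono measurable_const (fun y hy => ?_)
          have h1 : r (k+1) < dist y x := by
            have := hy.2
            simpa [mem_closedBall, not_le] using this
          have h2 : ‖x - y‖ = dist y x := by rw [dist_eq_norm, norm_sub_rev]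
          apply ENNReal.ofReal_le_ofReal
          rw [h2]
          apply one_div_le_one_div_of_le (by positivity)
          nlinarith [h1, hrpos (k+1), dist_nonneg (x := y) (y := x)]
        calc ∫⁻ y in A k, ENNReal.ofReal (1 / ‖x - y‖ ^ 2) ∂volume
            ≤ ∫⁻ _ in A k, ENNReal.ofReal (1 / (r (k+1)) ^ 2) ∂volume := hstep
          _ = ENNReal.ofReal (1 / (r (k+1)) ^ 2) * volume (A k) := setLIntegral_const _ _
          _ ≤ ENNReal.ofReal (1 / (r (k+1)) ^ 2) * (ENNReal.ofReal ((r k) ^ 3) * v) := by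
              gcongr
              rw [← vol_cball x (hrpos k).le]
              exact measure_mono Set.diff_subset
          _ = ENNReal.ofReal (1 / (r (k+1)) ^ 2 * (r k) ^ 3) * v := by
              rw [ENNReal.ofReal_mul (by positivity), mul_assoc]
          _ = ENNReal.ofReal (4 * ρ * (1/2)^k) * v := by
              congr 1
              apply congrArg
              have h2 : r (k+1) = r k / 2 := by
                simp only [hrdef]; ring
              have h3 : (1:ℝ)/((r k)/2)^2 * (r k)^3 = 4 * r k := by
                have h : r k ≠ 0 := (hrpos k).ne'
                field_simp
                ring
              rw [h2, h3]
              simp only [hrdef]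
              ring
    _ = 8 * ENNReal.ofReal ρ * v := by
        have hterm : ∀ k:ℕ, ENNReal.ofReal (4 * ρ * (1/2)^k) * v
            = ENNReal.ofReal (4*ρ) * (2⁻¹:ℝ≥0∞)^k * v := by
          intro k
          congr 1
          rw [ENNReal.ofReal_mul (by positivity), ENNReal.ofReal_pow (by norm_num)]
          congr 2
          rw [one_div, ENNReal.ofReal_inv_of_pos (by norm_num)]
          norm_num
        simp_rw [hterm]
        rw [ENNReal.tsum_mul_right, ENNReal.tsum_mul_left, ENNReal.tsum_geometric]
        have h2 : (1 - 2⁻¹ : ℝ≥0∞)⁻¹ = 2 := by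
          rw [ENNReal.one_sub_inv_two]; exact inv_inv (2 : ℝ≥0∞)
        rw [h2, ENNReal.ofReal_mul (by norm_num)]
        rw [show ENNReal.ofReal 4 = 4 by norm_num]
        ring

lemma sym_lintegral (x : X3) (E : Set X3) :
    ∫⁻ y in E, ENNReal.ofReal (1 / ‖x - y‖ ^ 2) ∂volume
      ≤ (8 * volume (ball (0:X3) 1) + 1) * (volume E) ^ ((1:ℝ)/3) := by
  set v := volume (ball (0:X3) 1) with hv
  by_cases hm0 : volume E = 0
  · rw [setLIntegral_measure_zero _ _ hm0]; exact zero_le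
  by_cases hminf : volume E = ∞
  · rw [hminf, ENNReal.top_rpow_of_pos (by norm_num), ENNReal.mul_top (by simp)]
    exact le_top
  set m := volume E with hmdef
  have hm_pos : 0 < m.toReal := ENNReal.toReal_pos hm0 hminf
  set ρ := m.toReal ^ ((1:ℝ)/3) with hρdef
  have hρ : 0 < ρ := Real.rpow_pos_of_pos hm_pos _
  have hρ3 : ρ ^ 3 = m.toReal := by
    rw [hρdef, ← Real.rpow_natCast (m.toReal ^ ((1:ℝ)/3)) 3, ← Real.rpow_mul hm_pos.le]
    norm_num
  have hofρ : ENNReal.ofReal ρ = m ^ ((1:ℝ)/3) := by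
    rw [hρdef, ← ENNReal.ofReal_rpow_of_nonneg ENNReal.toReal_nonneg (by norm_num),
      ENNReal.ofReal_toReal hminf]
  calc ∫⁻ y in E, ENNReal.ofReal (1 / ‖x - y‖ ^ 2) ∂volume
      = ∫⁻ y in (E ∩ ball x ρ) ∪ (E \ ball x ρ), ENNReal.ofReal (1 / ‖x - y‖ ^ 2) ∂volume := by
        rw [Set.inter_union_diff]
    _ ≤ (∫⁻ y in E ∩ ball x ρ, ENNReal.ofReal (1 / ‖x - y‖ ^ 2) ∂volume)
        + ∫⁻ y in E \ ball x ρ, ENNReal.ofReal (1 / ‖x - y‖ ^ 2) ∂volume :=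
        lintegral_union_le _ _ _
    _ ≤ 8 * ENNReal.ofReal ρ * v + ENNReal.ofReal (1 / ρ ^ 2) * m := by
        gcongr
        · exact le_trans (lintegral_mono_set Set.inter_subset_right) (ball_lintegral x ρ)
        · calc ∫⁻ y in E \ ball x ρ, ENNReal.ofReal (1 / ‖x - y‖ ^ 2) ∂volume
              ≤ ∫⁻ _ in E \ ball x ρ, ENNReal.ofReal (1 / ρ ^ 2) ∂volume := by
                refine setLIntegral_mono measurable_const (fun y hy => ?_)
                have h1 : ρ ≤ dist y x := not_lt.1 (fun hc => hy.2 (mem_ball.2 hc))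
                have h2 : ‖x - y‖ = dist y x := by rw [dist_eq_norm, norm_sub_rev]
                apply ENNReal.ofReal_le_ofReal
                rw [h2]
                apply one_div_le_one_div_of_le (by positivity)
                nlinarith [h1, hρ]
            _ = ENNReal.ofReal (1 / ρ ^ 2) * volume (E \ ball x ρ) := setLIntegral_const _ _
            _ ≤ ENNReal.ofReal (1 / ρ ^ 2) * m := by
                gcongr
                exact measure_mono Set.diff_subset
    _ = (8 * v + 1) * m ^ ((1:ℝ)/3) := by
        have h3 : ENNReal.ofReal (1 / ρ ^ 2) * m = ENNReal.ofReal ρ := by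
          rw [← ENNReal.ofReal_toReal hminf, ← hρ3, ← ENNReal.ofReal_mul (by positivity)]
          congr 1
          field_simp
        rw [h3, hofρ]
        ring

lemma measurable_distrib (F : X3 → ℝ) :
    Measurable (fun t : ℝ => ENNReal.ofReal t * (volume {y : X3 | t ≤ F y}) ^ ((1:ℝ)/3)) := by
  apply Measurable.mul
  · exact ENNReal.measurable_ofReal
  · have hanti : Antitone (fun t : ℝ => volume {y : X3 | t ≤ F y}) := by
      intro s t hst
      exact measure_mono (fun y hy => le_trans hst hy)
    exact hanti.measurable.pow_const _

lemma dyadic_sum_le (F : X3 → ℝ) :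
    ∑' n : ℤ, ENNReal.ofReal ((2:ℝ)^n * (2:ℝ)^n) * (volume {y : X3 | (2:ℝ)^n ≤ F y}) ^ ((1:ℝ)/3)
      ≤ 4 * ∫⁻ t in Set.Ioi (0:ℝ),
          ENNReal.ofReal t * (volume {y : X3 | t ≤ F y}) ^ ((1:ℝ)/3) := by
  set g : ℝ → ℝ≥0∞ := fun t => ENNReal.ofReal t * (volume {y : X3 | t ≤ F y}) ^ ((1:ℝ)/3)
    with hg
  have hgm : Measurable g := measurable_distrib F
  set I : ℤ → Set ℝ := fun n => Set.Ico ((2:ℝ)^(n-1)) ((2:ℝ)^n) with hI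
  have hIμ : ∀ n : ℤ, volume (I n) = ENNReal.ofReal ((2:ℝ)^(n-1)) := by
    intro n
    rw [hI]
    simp only [Real.volume_Ico]
    congr 1
    have h1 : (2:ℝ)^n = (2:ℝ)^(n-1) * 2 := by
      rw [← zpow_add_one₀ (by norm_num : (2:ℝ) ≠ 0)]; ring_nf
    rw [h1]; ring
  have key : ∀ n : ℤ, ENNReal.ofReal ((2:ℝ)^n * (2:ℝ)^n)
      * (volume {y : X3 | (2:ℝ)^n ≤ F y}) ^ ((1:ℝ)/3) ≤ 4 * ∫⁻ t in I n, g t := by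
    intro n
    have hconst : ENNReal.ofReal ((2:ℝ)^(n-1)) * (volume {y : X3 | (2:ℝ)^n ≤ F y}) ^ ((1:ℝ)/3)
        * ENNReal.ofReal ((2:ℝ)^(n-1)) ≤ ∫⁻ t in I n, g t := by
      have hb : ∀ t ∈ I n, ENNReal.ofReal ((2:ℝ)^(n-1))
          * (volume {y : X3 | (2:ℝ)^n ≤ F y}) ^ ((1:ℝ)/3) ≤ g t := by
        intro t ht
        rcases ht with ⟨ht1, ht2⟩
        apply mul_le_mul'
        · exact ENNReal.ofReal_le_ofReal ht1
        · apply ENNReal.rpow_le_rpow _ (by norm_num)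
          apply measure_mono
          intro y hy
          exact le_trans ht2.le hy
      calc ENNReal.ofReal ((2:ℝ)^(n-1)) * (volume {y : X3 | (2:ℝ)^n ≤ F y}) ^ ((1:ℝ)/3)
            * ENNReal.ofReal ((2:ℝ)^(n-1))
          = (ENNReal.ofReal ((2:ℝ)^(n-1)) * (volume {y : X3 | (2:ℝ)^n ≤ F y}) ^ ((1:ℝ)/3))
            * volume (I n) := by rw [hIμ n]
        _ = ∫⁻ _ in I n, ENNReal.ofReal ((2:ℝ)^(n-1))
            * (volume {y : X3 | (2:ℝ)^n ≤ F y}) ^ ((1:ℝ)/3) := (setLIntegral_const _ _).symm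
        _ ≤ ∫⁻ t in I n, g t := setLIntegral_mono hgm hb
    calc ENNReal.ofReal ((2:ℝ)^n * (2:ℝ)^n) * (volume {y : X3 | (2:ℝ)^n ≤ F y}) ^ ((1:ℝ)/3)
        = 4 * (ENNReal.ofReal ((2:ℝ)^(n-1)) * (volume {y : X3 | (2:ℝ)^n ≤ F y}) ^ ((1:ℝ)/3)
          * ENNReal.ofReal ((2:ℝ)^(n-1))) := by
          have h1 : (2:ℝ)^n * (2:ℝ)^n = 4 * ((2:ℝ)^(n-1) * (2:ℝ)^(n-1)) := by
            have h2 : (2:ℝ)^n = (2:ℝ)^(n-1) * 2 := by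
              rw [← zpow_add_one₀ (by norm_num : (2:ℝ) ≠ 0)]; ring_nf
            rw [h2]; ring
          rw [h1, ENNReal.ofReal_mul (by norm_num), ENNReal.ofReal_mul (by positivity),
            show ENNReal.ofReal 4 = 4 by norm_num]
          ring
      _ ≤ 4 * ∫⁻ t in I n, g t := by gcongr
  calc ∑' n : ℤ, ENNReal.ofReal ((2:ℝ)^n * (2:ℝ)^n)
        * (volume {y : X3 | (2:ℝ)^n ≤ F y}) ^ ((1:ℝ)/3)
      ≤ ∑' n : ℤ, 4 * ∫⁻ t in I n, g t := ENNReal.tsum_le_tsum key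
    _ = 4 * ∑' n : ℤ, ∫⁻ t in I n, g t := by rw [ENNReal.tsum_mul_left]
    _ ≤ 4 * ∫⁻ t in Set.Ioi (0:ℝ), g t := by
        gcongr
        have hdisj : Pairwise (Function.onFun Disjoint I) := by
          intro n m hnm
          rcases lt_or_gt_of_ne hnm with h | h
          · have h2 : (2:ℝ)^n ≤ (2:ℝ)^(m-1) :=
              zpow_le_zpow_right₀ (by norm_num) (by omega)
            exact Set.Ico_disjoint_Ico.2
              (le_trans (min_le_left _ _) (le_trans h2 (le_max_right _ _)))
          · have h2 : (2:ℝ)^m ≤ (2:ℝ)^(n-1) :=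
              zpow_le_zpow_right₀ (by norm_num) (by omega)
            exact Set.Ico_disjoint_Ico.2
              (le_trans (min_le_right _ _) (le_trans h2 (le_max_left _ _)))
        have hmeas : ∀ n : ℤ, MeasurableSet (I n) := fun n => measurableSet_Ico
        rw [← lintegral_iUnion hmeas hdisj g]
        apply lintegral_mono_set
        intro t ht
        rcases Set.mem_iUnion.1 ht with ⟨n, hn⟩
        exact lt_of_lt_of_le (by positivity) hn.1

lemma F2_lintegral (F : X3 → ℝ) (hF : ∀ y, 0 ≤ F y) (x : X3) :
    ∫⁻ y, ENNReal.ofReal ((F y)^2 * (1/‖x - y‖^2)) ∂volume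
      ≤ (8 * volume (ball (0:X3) 1) + 1) * 16 *
          ∫⁻ t in Set.Ioi (0:ℝ),
            ENNReal.ofReal t * (volume {y : X3 | t ≤ F y}) ^ ((1:ℝ)/3) := by
  set c := 8 * volume (ball (0:X3) 1) + 1 with hc
  set E : ℤ → Set X3 := fun n => toMeasurable volume {y : X3 | (2:ℝ)^n ≤ F y} with hE
  have hEmeas : ∀ n, MeasurableSet (E n) := fun n => measurableSet_toMeasurable _ _
  have hq : Measurable (fun y : X3 => ENNReal.ofReal (1/‖x - y‖^2)) := by
    apply ENNReal.measurable_ofReal.comp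
    exact measurable_const.div (((continuous_const.sub continuous_id).norm.pow _).measurable)
  have hmaj : ∀ y, ENNReal.ofReal ((F y)^2)
      ≤ ∑' n : ℤ, (E n).indicator (fun _ => ENNReal.ofReal (4 * ((2:ℝ)^n * (2:ℝ)^n))) y := by
    intro y
    rcases eq_or_lt_of_le (hF y) with h0 | h0
    · simp [← h0]
    set n := ⌊Real.logb 2 (F y)⌋ with hn
    have hn1 : (n:ℝ) ≤ Real.logb 2 (F y) := Int.floor_le _
    have hn2 : Real.logb 2 (F y) < (n:ℝ) + 1 := Int.lt_floor_add_one _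
    have e1 : (2:ℝ)^n ≤ F y := by
      calc (2:ℝ)^n = (2:ℝ)^((n:ℝ)) := (Real.rpow_intCast 2 n).symm
        _ ≤ (2:ℝ)^(Real.logb 2 (F y)) := Real.rpow_le_rpow_of_exponent_le (by norm_num) hn1
        _ = F y := Real.rpow_logb (by norm_num) (by norm_num) h0
    have e2 : F y < (2:ℝ)^(n+1) := by
      calc F y = (2:ℝ)^(Real.logb 2 (F y)) := (Real.rpow_logb (by norm_num) (by norm_num) h0).symm
        _ < (2:ℝ)^((n:ℝ)+1) := Real.rpow_lt_rpow_of_exponent_lt (by norm_num) hn2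
        _ = (2:ℝ)^(n+1) := by
            rw [show ((n:ℝ)+1) = ((n+1 : ℤ) : ℝ) by push_cast; ring, Real.rpow_intCast]
    have e3 : (F y)^2 ≤ 4 * ((2:ℝ)^n * (2:ℝ)^n) := by
      have h4 : (2:ℝ)^(n+1) = 2 * (2:ℝ)^n := by
        rw [zpow_add_one₀ (by norm_num : (2:ℝ) ≠ 0)]; ring
      nlinarith [e2, h0, zpow_pos (show (0:ℝ) < 2 by norm_num) n]
    have hy : y ∈ E n := subset_toMeasurable _ _ e1
    calc ENNReal.ofReal ((F y)^2) ≤ ENNReal.ofReal (4 * ((2:ℝ)^n * (2:ℝ)^n)) :=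
          ENNReal.ofReal_le_ofReal e3
      _ = (E n).indicator (fun _ => ENNReal.ofReal (4 * ((2:ℝ)^n * (2:ℝ)^n))) y := by
          rw [Set.indicator_of_mem hy]
      _ ≤ _ := ENNReal.le_tsum n
  calc ∫⁻ y, ENNReal.ofReal ((F y)^2 * (1/‖x - y‖^2)) ∂volume
      ≤ ∫⁻ y, ∑' n : ℤ, (E n).indicator
          (fun _ => ENNReal.ofReal (4 * ((2:ℝ)^n * (2:ℝ)^n))) y
          * ENNReal.ofReal (1/‖x - y‖^2) ∂volume := by
        apply lintegral_mono
        intro y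
        dsimp only
        rw [ENNReal.ofReal_mul (by positivity), ENNReal.tsum_mul_right]
        exact mul_le_mul_left (hmaj y) _
    _ = ∑' n : ℤ, ∫⁻ y, (E n).indicator
          (fun _ => ENNReal.ofReal (4 * ((2:ℝ)^n * (2:ℝ)^n))) y
          * ENNReal.ofReal (1/‖x - y‖^2) ∂volume := by
        apply lintegral_tsum
        intro n
        exact ((measurable_const.indicator (hEmeas n)).mul hq).aemeasurable
    _ ≤ ∑' n : ℤ, 4 * (ENNReal.ofReal ((2:ℝ)^n * (2:ℝ)^n)
        * (c * (volume {y : X3 | (2:ℝ)^n ≤ F y}) ^ ((1:ℝ)/3))) := by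
        apply ENNReal.tsum_le_tsum
        intro n
        have hind : ∀ y, (E n).indicator
            (fun _ => ENNReal.ofReal (4 * ((2:ℝ)^n * (2:ℝ)^n))) y
            * ENNReal.ofReal (1/‖x - y‖^2)
            = (E n).indicator (fun y => ENNReal.ofReal (4 * ((2:ℝ)^n * (2:ℝ)^n))
                * ENNReal.ofReal (1/‖x - y‖^2)) y := by
          intro y
          by_cases hy : y ∈ E n
          · simp [Set.indicator_of_mem hy]
          · simp [Set.indicator_of_notMem hy]
        simp_rw [hind]
        rw [lintegral_indicator (hEmeas n), lintegral_const_mul _ hq]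
        calc ENNReal.ofReal (4 * ((2:ℝ)^n * (2:ℝ)^n))
              * ∫⁻ y in E n, ENNReal.ofReal (1/‖x - y‖^2) ∂volume
            ≤ ENNReal.ofReal (4 * ((2:ℝ)^n * (2:ℝ)^n)) * (c * (volume (E n)) ^ ((1:ℝ)/3)) := by
              gcongr
              exact sym_lintegral x (E n)
          _ = 4 * (ENNReal.ofReal ((2:ℝ)^n * (2:ℝ)^n)
              * (c * (volume {y : X3 | (2:ℝ)^n ≤ F y}) ^ ((1:ℝ)/3))) := by
              rw [hE]
              simp only [measure_toMeasurable]
              rw [ENNReal.ofReal_mul (by norm_num), show ENNReal.ofReal 4 = 4 by norm_num]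
              ring
    _ = c * 4 * ∑' n : ℤ, ENNReal.ofReal ((2:ℝ)^n * (2:ℝ)^n)
        * (volume {y : X3 | (2:ℝ)^n ≤ F y}) ^ ((1:ℝ)/3) := by
        rw [← ENNReal.tsum_mul_left]
        congr 1
        funext n
        ring
    _ ≤ c * 16 * ∫⁻ t in Set.Ioi (0:ℝ),
          ENNReal.ofReal t * (volume {y : X3 | t ≤ F y}) ^ ((1:ℝ)/3) := by
        calc c * 4 * ∑' n : ℤ, ENNReal.ofReal ((2:ℝ)^n * (2:ℝ)^n)
            * (volume {y : X3 | (2:ℝ)^n ≤ F y}) ^ ((1:ℝ)/3)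
            ≤ c * 4 * (4 * ∫⁻ t in Set.Ioi (0:ℝ),
              ENNReal.ofReal t * (volume {y : X3 | t ≤ F y}) ^ ((1:ℝ)/3)) := by
              gcongr
              exact dyadic_sum_le F
          _ = c * 16 * ∫⁻ t in Set.Ioi (0:ℝ),
              ENNReal.ofReal t * (volume {y : X3 | t ≤ F y}) ^ ((1:ℝ)/3) := by ring
    _ = c * 16 * ∫⁻ t in Set.Ioi (0:ℝ),
          ENNReal.ofReal t * (volume {y : X3 | t ≤ F y}) ^ ((1:ℝ)/3) := rfl

set_option maxHeartbeats 1000000 in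
lemma exp_decay_lintegral {c : ℝ} (hc : 0 < c) :
    ∫⁻ y : X3, ENNReal.ofReal (Real.exp (-(c * ‖y‖))) ∂volume < ∞ := by
  set v := volume (ball (0:X3) 1) with hv
  have hvlt : v < ∞ := measure_ball_lt_top
  set S : ℕ → Set X3 := fun k => closedBall 0 (k+1) \ ball 0 k with hS
  have hcover : (Set.univ : Set X3) ⊆ ⋃ k, S k := by
    intro y _
    set k := ⌊‖y‖⌋₊ with hk
    refine Set.mem_iUnion.2 ⟨k, ?_, ?_⟩
    · simp only [mem_closedBall, dist_zero_right]
      exact le_of_lt (by exact_mod_cast Nat.lt_floor_add_one ‖y‖)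
    · simp only [mem_ball, dist_zero_right, not_lt]
      exact Nat.floor_le (norm_nonneg y)
  have hbound : ∀ k : ℕ, ∫⁻ y in S k, ENNReal.ofReal (Real.exp (-(c * ‖y‖))) ∂volume
      ≤ ENNReal.ofReal (Real.exp (-(c * k)) * (k+1)^3) * v := by
    intro k
    calc ∫⁻ y in S k, ENNReal.ofReal (Real.exp (-(c * ‖y‖))) ∂volume
        ≤ ∫⁻ _ in S k, ENNReal.ofReal (Real.exp (-(c * k))) ∂volume := by
          refine setLIntegral_mono measurable_const (fun y hy => ?_)
          apply ENNReal.ofReal_le_ofReal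
          apply Real.exp_le_exp.2
          have : (k:ℝ) ≤ ‖y‖ := by
            have := hy.2
            simpa [mem_ball, dist_zero_right, not_lt] using this
          nlinarith
      _ = ENNReal.ofReal (Real.exp (-(c * k))) * volume (S k) := setLIntegral_const _ _
      _ ≤ ENNReal.ofReal (Real.exp (-(c * k))) * (ENNReal.ofReal (((k:ℝ)+1)^3) * v) := by
          gcongr
          rw [← vol_cball 0 (by positivity)]
          exact measure_mono Set.diff_subset
      _ = ENNReal.ofReal (Real.exp (-(c * k)) * (k+1)^3) * v := by
          rw [ENNReal.ofReal_mul (Real.exp_nonneg _), mul_assoc]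
  have hsum : Summable (fun k : ℕ => Real.exp (-(c * k)) * ((k:ℝ)+1)^3) := by
    have hr : Real.exp (-c) < 1 := Real.exp_lt_one_iff.2 (by linarith)
    have hr0 : 0 < Real.exp (-c) := Real.exp_pos _
    have hs : Summable (fun n : ℕ => (n:ℝ)^3 * (Real.exp (-c))^n) :=
      summable_pow_mul_geometric_of_norm_lt_one 3 (by
        rw [Real.norm_eq_abs, abs_of_pos hr0]; exact hr)
    have hs1 : Summable (fun n : ℕ => ((n+1:ℕ):ℝ)^3 * (Real.exp (-c))^(n+1)) :=
      (summable_nat_add_iff 1).2 hs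
    have hs2 := hs1.mul_left (Real.exp (-c))⁻¹
    apply hs2.congr
    intro n
    have he : Real.exp (-(c * n)) = (Real.exp (-c))^n := by
      rw [← Real.exp_nat_mul]; ring_nf
    push_cast
    rw [he]
    field_simp
    ring
  calc ∫⁻ y : X3, ENNReal.ofReal (Real.exp (-(c * ‖y‖))) ∂volume
      = ∫⁻ y in Set.univ, ENNReal.ofReal (Real.exp (-(c * ‖y‖))) ∂volume := by
        rw [Measure.restrict_univ]
    _ ≤ ∫⁻ y in ⋃ k, S k, ENNReal.ofReal (Real.exp (-(c * ‖y‖))) ∂volume :=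
        lintegral_mono_set hcover
    _ ≤ ∑' (k : ℕ), ∫⁻ y in S k, ENNReal.ofReal (Real.exp (-(c * ‖y‖))) ∂volume :=
        lintegral_iUnion_le _ _
    _ ≤ ∑' (k : ℕ), ENNReal.ofReal (Real.exp (-(c * (k:ℝ))) * ((k:ℝ)+1)^3) * v :=
        ENNReal.tsum_le_tsum hbound
    _ = (∑' (k : ℕ), ENNReal.ofReal (Real.exp (-(c * (k:ℝ))) * ((k:ℝ)+1)^3)) * v :=
        ENNReal.tsum_mul_right
    _ = ENNReal.ofReal (∑' (k : ℕ), Real.exp (-(c * (k:ℝ))) * ((k:ℝ)+1)^3) * v := by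
        rw [ENNReal.ofReal_tsum_of_nonneg (fun k => by positivity) hsum]
    _ < ∞ := ENNReal.mul_lt_top ENNReal.ofReal_lt_top hvlt

lemma lorentz_unpack (f : X3 → ℂ) (F : X3 → ℝ) (hFf : ∀ y, F y = ‖f y‖)
    (h : ENNReal.ofReal 6 ^ ((1:ℝ) / 2) *
      (∫⁻ t in Set.Ioi (0 : ℝ),
        (ENNReal.ofReal t * volume {x : X3 | ENNReal.ofReal t ≤ (‖f x‖₊ : ℝ≥0∞)} ^ ((1:ℝ) / 6)) ^ (2:ℝ) /
          ENNReal.ofReal t) ^ ((1:ℝ) / 2) < ∞) :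
    ∫⁻ t in Set.Ioi (0:ℝ),
        ENNReal.ofReal t * (volume {y : X3 | t ≤ F y}) ^ ((1:ℝ)/3) < ∞ := by
  set J := ∫⁻ t in Set.Ioi (0 : ℝ),
      (ENNReal.ofReal t * volume {x : X3 | ENNReal.ofReal t ≤ (‖f x‖₊ : ℝ≥0∞)} ^ ((1:ℝ) / 6)) ^ (2:ℝ) /
        ENNReal.ofReal t with hJ
  have h60 : (ENNReal.ofReal 6 : ℝ≥0∞) ^ ((1:ℝ) / 2) ≠ 0 := by
    apply ne_of_gt
    apply ENNReal.rpow_pos (by norm_num) (by norm_num)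
  have hJfin : J < ∞ := by
    by_contra hcon
    push_neg at hcon
    have : J = ∞ := top_le_iff.1 hcon
    rw [this] at h
    rw [ENNReal.top_rpow_of_pos (by norm_num), ENNReal.mul_top h60] at h
    exact (lt_irrefl _ h).elim
  have heq : ∫⁻ t in Set.Ioi (0:ℝ),
      ENNReal.ofReal t * (volume {y : X3 | t ≤ F y}) ^ ((1:ℝ)/3) = J := by
    rw [hJ]
    apply setLIntegral_congr_fun measurableSet_Ioi
    intro t ht
    have ht0 : (0:ℝ) < t := ht
    have hset : {x : X3 | ENNReal.ofReal t ≤ (‖f x‖₊ : ℝ≥0∞)} = {y : X3 | t ≤ F y} := by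
      ext y
      simp only [Set.mem_setOf_eq]
      rw [← enorm_eq_nnnorm, ← ofReal_norm, hFf y]
      exact (ENNReal.ofReal_le_ofReal_iff (norm_nonneg _))
    beta_reduce
    rw [hset]
    set a := ENNReal.ofReal t with ha
    set m := volume {y : X3 | t ≤ F y} with hm
    have ha0 : a ≠ 0 := by
      rw [ha]
      simpa using ht0
    have hatop : a ≠ ∞ := ENNReal.ofReal_ne_top
    have e1 : (a * m ^ ((1:ℝ)/6)) ^ (2:ℝ) = a^(2:ℝ) * (m ^ ((1:ℝ)/6))^(2:ℝ) :=
      ENNReal.mul_rpow_of_nonneg _ _ (by norm_num)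
    have e2 : (m ^ ((1:ℝ)/6))^(2:ℝ) = m ^ ((1:ℝ)/3) := by
      rw [← ENNReal.rpow_mul]
      norm_num
    have e3 : a^(2:ℝ) = a * a := by
      rw [show (2:ℝ) = ((2:ℕ):ℝ) by norm_num, ENNReal.rpow_natCast, sq]
    rw [e1, e2, e3, mul_assoc, mul_comm a (a * m ^ ((1:ℝ)/3)),
      mul_div_assoc, ENNReal.div_self ha0 hatop, mul_one]
  rw [heq]
  exact hJfin

lemma amgm_div (u v r : ℝ) (hu : 0 ≤ u) (hv : 0 ≤ v) (hr : 0 ≤ r) :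
    u * v / (4 * Real.pi * r) ≤ (1/(8*Real.pi)) * ((u/r)^2 + v^2) := by
  have hπ := Real.pi_pos
  rcases eq_or_lt_of_le hr with h0 | h0
  · rw [← h0]
    simp only [mul_zero, div_zero]
    positivity
  · rw [div_le_iff₀ (by positivity : (0:ℝ) < 4 * Real.pi * r)]
    have key : (1/(8*Real.pi)) * ((u/r)^2 + v^2) * (4*Real.pi*r) = (u^2/r + v^2*r)/2 := by
      rw [div_pow]
      field_simp
      ring
    rw [key, le_div_iff₀ (by norm_num : (0:ℝ) < 2), div_add' _ _ _ h0.ne',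
      le_div_iff₀ h0]
    nlinarith [sq_nonneg (u - v*r)]

lemma negKernel_nonneg (lamj : ℝ) (x y : X3) : 0 ≤ negKernel lamj x y := by
  unfold negKernel
  have := Real.pi_pos
  positivity

lemma kernel_bound {lamj ε : ℝ} (hε : 0 < ε) (hεlt : ε < Real.sqrt (-lamj)) (x y : X3) :
    negKernel lamj x y
      ≤ Real.exp (-(ε*‖x‖)) * (Real.exp (ε*‖y‖) / (4*Real.pi*‖x - y‖)) := by
  have hπ := Real.pi_pos
  set r := ‖x - y‖ with hrdef
  have hr0 : 0 ≤ r := norm_nonneg _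
  rcases eq_or_lt_of_le hr0 with h0 | h0
  · unfold negKernel
    rw [← hrdef, ← h0]
    simp
  · unfold negKernel
    rw [← hrdef]
    have hnum : Real.exp (-(Real.sqrt (-lamj)) * r) ≤ Real.exp (-(ε*‖x‖) + ε*‖y‖) := by
      apply Real.exp_le_exp.2
      have h1 : ‖x‖ - ‖y‖ ≤ r := by
        rw [hrdef]
        exact norm_sub_norm_le x y
      have h2 : ε * (‖x‖ - ‖y‖) ≤ ε * r := mul_le_mul_of_nonneg_left h1 hε.le
      have h3 : ε * r ≤ Real.sqrt (-lamj) * r := mul_le_mul_of_nonneg_right hεlt.le hr0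
      nlinarith
    calc Real.exp (-(Real.sqrt (-lamj)) * r) / (4*Real.pi*r)
        ≤ Real.exp (-(ε*‖x‖) + ε*‖y‖) / (4*Real.pi*r) := by
          apply div_le_div_of_nonneg_right hnum (by positivity)
      _ = Real.exp (-(ε*‖x‖)) * (Real.exp (ε*‖y‖) / (4*Real.pi*r)) := by
          rw [Real.exp_add]
          ring

end Helpers
set_option maxHeartbeats 1000000 in
/-- Exponential decay of eigenfunctions: if `λⱼ < 0`,
`ψⱼ = -R₀(λⱼ)(Vψⱼ)` with `V = V₁ + V₂`, `V₁` bounded and compactly supported,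
`‖V₂‖_𝒦 ≤ 1`, `e^{ε|·|}V₂ ∈ L^{6,2}` for some `0 < ε < √(-λⱼ)`, and the operator
`e^{ε|·|}R₀(λⱼ)V₂ e^{-ε|·|}` has `L^∞ → L^∞` norm less than `1`, then `e^{ε|x|}ψⱼ ∈ L^∞`;
in particular `ψⱼ ∈ L^p` for all `1 ≤ p ≤ ∞`. -/
theorem eigenfunction_exponential_decay (V₁ V₂ : EuclideanSpace ℝ (Fin 3) → ℝ)
    (ψ : EuclideanSpace ℝ (Fin 3) → ℂ) (lamj : ℝ) (hlam : lamj < 0)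
    (hψ : MemLp ψ 2 volume)
    (hV₁b : ∃ M, ∀ x, |V₁ x| ≤ M) (hV₁s : HasCompactSupport V₁)
    (hV₂K : ∀ x : EuclideanSpace ℝ (Fin 3),
      ∫⁻ y, (‖V₂ y‖₊ : ℝ≥0∞) / ENNReal.ofReal ‖x - y‖ ≤ 1)
    (ε : ℝ) (hε : 0 < ε) (hεlt : ε < Real.sqrt (-lamj))
    (hV₂L : lorentzNorm 6 2 volume
      (fun x => ((Real.exp (ε * ‖x‖) * V₂ x : ℝ) : ℂ)) < ∞)
    (heq : ∀ x, ψ x = -∫ y, ((negKernel lamj x y : ℝ) : ℂ) * (((V₁ y + V₂ y : ℝ) : ℂ) * ψ y))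
    (θ : ℝ) (hθ : θ < 1)
    (hop : ∀ g : EuclideanSpace ℝ (Fin 3) → ℂ, (∀ y, ‖g y‖ ≤ 1) →
      ∀ x, Real.exp (ε * ‖x‖) *
          ‖∫ y, ((negKernel lamj x y : ℝ) : ℂ) *
            ((V₂ y : ℂ) * (((Real.exp (-(ε * ‖y‖)) : ℝ) : ℂ) * g y))‖ ≤ θ) :
    (∃ M : ℝ, ∀ x, ‖ψ x‖ ≤ M * Real.exp (-(ε * ‖x‖))) ∧
      ∀ p : ℝ≥0∞, 1 ≤ p → MemLp ψ p volume := by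
  classical
  have hπ := Real.pi_pos
  obtain ⟨M₁, hM₁⟩ := hV₁b
  have hM₁0 : 0 ≤ M₁ := le_trans (abs_nonneg _) (hM₁ 0)
  obtain ⟨R, hRsub⟩ : ∃ R, tsupport V₁ ⊆ Metric.closedBall 0 R :=
    hV₁s.isBounded.subset_closedBall 0
  have hV₁zero : ∀ y, y ∉ Metric.closedBall (0 : EuclideanSpace ℝ (Fin 3)) R → V₁ y = 0 :=
    fun y hy => image_eq_zero_of_notMem_tsupport (fun hc => hy (hRsub hc))
  set F : EuclideanSpace ℝ (Fin 3) → ℝ := fun y => Real.exp (ε * ‖y‖) * |V₂ y| with hFdef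
  have hF0 : ∀ y, 0 ≤ F y := fun y => by positivity
  set I := ∫⁻ t in Set.Ioi (0:ℝ),
      ENNReal.ofReal t *
        (volume {y : EuclideanSpace ℝ (Fin 3) | t ≤ F y}) ^ ((1:ℝ)/3) with hIdef
  have hI : I < ∞ := by
    rw [hIdef]
    apply lorentz_unpack (fun x => ((Real.exp (ε * ‖x‖) * V₂ x : ℝ) : ℂ)) F
    · intro y
      rw [hFdef]
      simp only [Complex.norm_real, Real.norm_eq_abs, abs_mul,
        abs_of_pos (Real.exp_pos _)]
    · rw [lorentzNorm] at hV₂L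
      exact hV₂L
  set v := volume (Metric.ball (0 : EuclideanSpace ℝ (Fin 3)) 1) with hv
  have hvfin : v < ∞ := measure_ball_lt_top
  set csym := 8 * v + 1 with hcsym
  have hcsymfin : csym < ∞ :=
    ENNReal.add_lt_top.2 ⟨ENNReal.mul_lt_top (by norm_num) hvfin, ENNReal.one_lt_top⟩
  set b := (1/(8*Real.pi) : ℝ) with hbdef
  set a := (M₁ * Real.exp (ε*R))^2 * b with hadef
  have hb0 : 0 ≤ b := by positivity
  have ha0 : 0 ≤ a := by positivity
  -- P finite
  set P := ∫⁻ y, ENNReal.ofReal (‖ψ y‖^2) ∂volume with hPdef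
  have hP : P < ∞ := by
    have h2 := hψ.2
    rw [eLpNorm_eq_lintegral_rpow_enorm_toReal two_ne_zero ENNReal.ofNat_ne_top] at h2
    simp only [enorm_eq_nnnorm] at h2
    have htr : (2:ℝ≥0∞).toReal = 2 := by norm_num
    rw [htr] at h2
    have hlt : ∫⁻ y, (‖ψ y‖₊ : ℝ≥0∞) ^ (2:ℝ) ∂volume < ∞ := by
      by_contra hcon
      push_neg at hcon
      rw [top_le_iff.1 hcon, ENNReal.top_rpow_of_pos (by norm_num)] at h2
      exact lt_irrefl _ h2
    have hcoe : ∀ y : EuclideanSpace ℝ (Fin 3),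
        ENNReal.ofReal (‖ψ y‖^2) = (‖ψ y‖₊ : ℝ≥0∞) ^ (2:ℝ) := by
      intro y
      rw [← enorm_eq_nnnorm, ← ofReal_norm,
        ENNReal.ofReal_rpow_of_nonneg (norm_nonneg _) (by norm_num)]
      congr 1
      rw [← Real.rpow_natCast ‖ψ y‖ 2]
      norm_num
    rw [hPdef]
    simp_rw [hcoe]
    exact hlt
  set D1 := csym * (volume (Metric.closedBall (0:EuclideanSpace ℝ (Fin 3)) R)) ^ ((1:ℝ)/3)
    with hD1def
  have hD1 : D1 < ∞ := by
    rw [hD1def]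
    apply ENNReal.mul_lt_top hcsymfin
    apply ENNReal.rpow_lt_top_of_nonneg (by norm_num)
    exact measure_closedBall_lt_top.ne
  set D2 := csym * 16 * I with hD2def
  have hD2 : D2 < ∞ := by
    rw [hD2def]
    exact ENNReal.mul_lt_top (ENNReal.mul_lt_top hcsymfin (by norm_num)) hI
  set C0 := ENNReal.ofReal a * D1 + ENNReal.ofReal b * D2 + ENNReal.ofReal (2*b) * P
    with hC0def
  have hC0 : C0 < ∞ := by
    rw [hC0def]
    apply ENNReal.add_lt_top.2
    constructor
    · apply ENNReal.add_lt_top.2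
      exact ⟨ENNReal.mul_lt_top ENNReal.ofReal_lt_top hD1,
        ENNReal.mul_lt_top ENNReal.ofReal_lt_top hD2⟩
    · exact ENNReal.mul_lt_top ENNReal.ofReal_lt_top hP
  -- main pointwise estimate
  have main : ∀ x, (‖ψ x‖₊ : ℝ≥0∞) ≤ ENNReal.ofReal (Real.exp (-(ε*‖x‖))) * C0 := by
    intro x
    set q : EuclideanSpace ℝ (Fin 3) → ℝ := fun y => 1/‖x - y‖^2 with hqdef
    have hqmeas : Measurable fun y : EuclideanSpace ℝ (Fin 3) => q y := by
      rw [hqdef]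
      exact measurable_const.div (((continuous_const.sub continuous_id).norm.pow _).measurable)
    set IND : EuclideanSpace ℝ (Fin 3) → ℝ :=
      (Metric.closedBall (0:EuclideanSpace ℝ (Fin 3)) R).indicator q with hINDdef
    set H : EuclideanSpace ℝ (Fin 3) → ℝ :=
      fun y => a * IND y + (b * ((F y)^2 * q y) + (2*b) * ‖ψ y‖^2) with hHdef
    have hIND0 : ∀ y, 0 ≤ IND y := by
      intro y
      apply Set.indicator_nonneg
      intro y' _
      rw [hqdef]
      positivity
    -- pointwise domination
    have hpt : ∀ y, (‖((negKernel lamj x y : ℝ) : ℂ) * (((V₁ y + V₂ y : ℝ) : ℂ) * ψ y)‖₊ : ℝ≥0∞)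
        ≤ ENNReal.ofReal (Real.exp (-(ε*‖x‖)) * H y) := by
      intro y
      rw [← enorm_eq_nnnorm, ← ofReal_norm]
      apply ENNReal.ofReal_le_ofReal
      set r := ‖x - y‖ with hrdef
      have hr0 : (0:ℝ) ≤ r := norm_nonneg _
      have hnorm : ‖((negKernel lamj x y : ℝ) : ℂ) * (((V₁ y + V₂ y : ℝ) : ℂ) * ψ y)‖
          = negKernel lamj x y * (|V₁ y + V₂ y| * ‖ψ y‖) := by
        rw [norm_mul, norm_mul, Complex.norm_real, Complex.norm_real,
          Real.norm_eq_abs, Real.norm_eq_abs, _root_.abs_of_nonneg (negKernel_nonneg lamj x y)]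
      rw [hnorm]
      have step1 : negKernel lamj x y * (|V₁ y + V₂ y| * ‖ψ y‖)
          ≤ (Real.exp (-(ε*‖x‖)) * (Real.exp (ε*‖y‖) / (4*Real.pi*r)))
            * ((|V₁ y| + |V₂ y|) * ‖ψ y‖) := by
        apply mul_le_mul (kernel_bound hε hεlt x y)
          (mul_le_mul_of_nonneg_right (abs_add_le _ _) (norm_nonneg _))
          (by positivity) (by positivity)
      have e1 : (Real.exp (-(ε*‖x‖)) * (Real.exp (ε*‖y‖) / (4*Real.pi*r)))
            * ((|V₁ y| + |V₂ y|) * ‖ψ y‖)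
          = Real.exp (-(ε*‖x‖)) * ((Real.exp (ε*‖y‖) * |V₁ y|) * ‖ψ y‖ / (4*Real.pi*r)
            + (Real.exp (ε*‖y‖) * |V₂ y|) * ‖ψ y‖ / (4*Real.pi*r)) := by
        ring
      -- V1 term
      set χ := (Metric.closedBall (0:EuclideanSpace ℝ (Fin 3)) R).indicator
        (fun _ => (1:ℝ)) y with hχdef
      have hχ01 : χ = 0 ∨ χ = 1 := by
        rw [hχdef]
        by_cases hy : y ∈ Metric.closedBall (0:EuclideanSpace ℝ (Fin 3)) R
        · right; rw [Set.indicator_of_mem hy]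
        · left; rw [Set.indicator_of_notMem hy]
      have hχ0 : 0 ≤ χ := by rcases hχ01 with h | h <;> rw [h] <;> norm_num
      have hV₁y : Real.exp (ε*‖y‖) * |V₁ y| ≤ (M₁ * Real.exp (ε*R)) * χ := by
        rw [hχdef]
        by_cases hy : y ∈ Metric.closedBall (0:EuclideanSpace ℝ (Fin 3)) R
        · rw [Set.indicator_of_mem hy, mul_one]
          have h1 : ‖y‖ ≤ R := by
            simpa [Metric.mem_closedBall, dist_zero_right] using hy
          rw [mul_comm M₁ (Real.exp (ε*R))]
          apply mul_le_mul _ (hM₁ y) (abs_nonneg _) (Real.exp_nonneg _)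
          · exact Real.exp_le_exp.2 (mul_le_mul_of_nonneg_left h1 hε.le)
        · rw [Set.indicator_of_notMem hy, mul_zero, hV₁zero y hy]
          simp [Real.exp_nonneg]
      have hredχ : ((M₁ * Real.exp (ε*R)) * χ / r)^2 = (M₁ * Real.exp (ε*R))^2 * IND y := by
        rw [hINDdef, hχdef]
        by_cases hy : y ∈ Metric.closedBall (0:EuclideanSpace ℝ (Fin 3)) R
        · rw [Set.indicator_of_mem hy, Set.indicator_of_mem hy]
          simp only [hqdef]
          rw [← hrdef, mul_one, div_pow, mul_one_div]
        · rw [Set.indicator_of_notMem hy, Set.indicator_of_notMem hy]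
          simp
      have hT1 : (Real.exp (ε*‖y‖) * |V₁ y|) * ‖ψ y‖ / (4*Real.pi*r)
          ≤ b * ((M₁ * Real.exp (ε*R))^2 * IND y + ‖ψ y‖^2) := by
        calc (Real.exp (ε*‖y‖) * |V₁ y|) * ‖ψ y‖ / (4*Real.pi*r)
            ≤ ((M₁ * Real.exp (ε*R)) * χ) * ‖ψ y‖ / (4*Real.pi*r) := by
              rcases eq_or_lt_of_le hr0 with h0 | h0
              · rw [← h0]
                simp
              · have hc : (0:ℝ) < 4*Real.pi*r := by positivity
                gcongr
          _ ≤ b * ((((M₁ * Real.exp (ε*R)) * χ) / r)^2 + ‖ψ y‖^2) := by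
              rw [hbdef]
              exact amgm_div _ _ _ (by positivity) (norm_nonneg _) hr0
          _ = b * ((M₁ * Real.exp (ε*R))^2 * IND y + ‖ψ y‖^2) := by rw [hredχ]
      have hT2 : (Real.exp (ε*‖y‖) * |V₂ y|) * ‖ψ y‖ / (4*Real.pi*r)
          ≤ b * ((F y)^2 * q y + ‖ψ y‖^2) := by
        have h1 := amgm_div (F y) ‖ψ y‖ r (hF0 y) (norm_nonneg _) hr0
        rw [hbdef]
        simp only [hqdef]
        rw [← hrdef]
        calc (Real.exp (ε*‖y‖) * |V₂ y|) * ‖ψ y‖ / (4*Real.pi*r)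
            = F y * ‖ψ y‖ / (4*Real.pi*r) := by simp only [hFdef]
          _ ≤ (1/(8*Real.pi)) * ((F y / r)^2 + ‖ψ y‖^2) := h1
          _ = (1/(8*Real.pi)) * ((F y)^2 * (1/r^2) + ‖ψ y‖^2) := by
              rw [div_pow, mul_one_div]
      calc negKernel lamj x y * (|V₁ y + V₂ y| * ‖ψ y‖)
          ≤ Real.exp (-(ε*‖x‖)) * ((Real.exp (ε*‖y‖) * |V₁ y|) * ‖ψ y‖ / (4*Real.pi*r)
            + (Real.exp (ε*‖y‖) * |V₂ y|) * ‖ψ y‖ / (4*Real.pi*r)) := by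
            rw [← e1]; exact step1
        _ ≤ Real.exp (-(ε*‖x‖)) * (b * ((M₁ * Real.exp (ε*R))^2 * IND y + ‖ψ y‖^2)
            + b * ((F y)^2 * q y + ‖ψ y‖^2)) := by
            apply mul_le_mul_of_nonneg_left (add_le_add hT1 hT2) (Real.exp_nonneg _)
        _ = Real.exp (-(ε*‖x‖)) * H y := by
            rw [hHdef, hadef]
            ring
    have hq0 : ∀ y, (0:ℝ) ≤ q y := by
      intro y
      rw [hqdef]
      positivity
    have hx1 : (‖ψ x‖₊ : ℝ≥0∞)
        ≤ ∫⁻ y, (‖((negKernel lamj x y : ℝ) : ℂ)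
            * (((V₁ y + V₂ y : ℝ) : ℂ) * ψ y)‖₊ : ℝ≥0∞) ∂volume := by
      rw [heq x, nnnorm_neg]
      exact enorm_integral_le_lintegral_enorm _
    have hx3 : ∫⁻ y, ENNReal.ofReal (Real.exp (-(ε*‖x‖)) * H y) ∂volume
        = ENNReal.ofReal (Real.exp (-(ε*‖x‖))) * ∫⁻ y, ENNReal.ofReal (H y) ∂volume := by
      have hco : ∀ y, ENNReal.ofReal (Real.exp (-(ε*‖x‖)) * H y)
          = ENNReal.ofReal (Real.exp (-(ε*‖x‖))) * ENNReal.ofReal (H y) :=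
        fun y => ENNReal.ofReal_mul (Real.exp_nonneg _)
      simp_rw [hco]
      exact lintegral_const_mul' _ _ ENNReal.ofReal_ne_top
    have hsplit : ∫⁻ y, ENNReal.ofReal (H y) ∂volume ≤ C0 := by
      have hpt2 : ∀ y, ENNReal.ofReal (H y)
          = ENNReal.ofReal (a * IND y)
            + (ENNReal.ofReal (b * ((F y)^2 * q y)) + ENNReal.ofReal ((2*b) * ‖ψ y‖^2)) := by
        intro y
        rw [hHdef]
        dsimp only
        rw [ENNReal.ofReal_add (mul_nonneg ha0 (hIND0 y)) ?h2]
        case h2 =>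
          apply add_nonneg
          · apply mul_nonneg hb0
            apply mul_nonneg (sq_nonneg _) (hq0 y)
          · positivity
        rw [ENNReal.ofReal_add ?h3 (by positivity)]
        case h3 =>
          apply mul_nonneg hb0
          apply mul_nonneg (sq_nonneg _) (hq0 y)
      have hmeasA : Measurable fun y => ENNReal.ofReal (a * IND y) := by
        apply ENNReal.measurable_ofReal.comp
        exact ((hqmeas.indicator measurableSet_closedBall).const_mul a)
      have hmeasC : AEMeasurable (fun y => ENNReal.ofReal ((2*b) * ‖ψ y‖^2)) volume := by
        apply ENNReal.measurable_ofReal.comp_aemeasurable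
        exact ((hψ.1.norm.aemeasurable.pow_const 2).const_mul (2*b))
      have hTA : ∫⁻ y, ENNReal.ofReal (a * IND y) ∂volume ≤ ENNReal.ofReal a * D1 := by
        have hco : ∀ y, ENNReal.ofReal (a * IND y)
            = ENNReal.ofReal a * ENNReal.ofReal (IND y) :=
          fun y => ENNReal.ofReal_mul ha0
        simp_rw [hco]
        rw [lintegral_const_mul' _ _ ENNReal.ofReal_ne_top]
        apply mul_le_mul_right
        have hind : ∀ y, ENNReal.ofReal (IND y)
            = (Metric.closedBall (0:EuclideanSpace ℝ (Fin 3)) R).indicator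
              (fun y => ENNReal.ofReal (q y)) y := by
          intro y
          rw [hINDdef]
          by_cases hy : y ∈ Metric.closedBall (0:EuclideanSpace ℝ (Fin 3)) R
          · rw [Set.indicator_of_mem hy, Set.indicator_of_mem hy]
          · rw [Set.indicator_of_notMem hy, Set.indicator_of_notMem hy,
              ENNReal.ofReal_zero]
        simp_rw [hind]
        rw [lintegral_indicator measurableSet_closedBall]
        rw [hD1def]
        have := sym_lintegral x (Metric.closedBall (0:EuclideanSpace ℝ (Fin 3)) R)
        simp only [hqdef]
        exact this
      have hTB : ∫⁻ y, ENNReal.ofReal (b * ((F y)^2 * q y)) ∂volume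
          ≤ ENNReal.ofReal b * D2 := by
        have hco : ∀ y, ENNReal.ofReal (b * ((F y)^2 * q y))
            = ENNReal.ofReal b * ENNReal.ofReal ((F y)^2 * q y) :=
          fun y => ENNReal.ofReal_mul hb0
        simp_rw [hco]
        rw [lintegral_const_mul' _ _ ENNReal.ofReal_ne_top]
        apply mul_le_mul_right
        rw [hD2def]
        have := F2_lintegral F hF0 x
        simp only [hqdef]
        rw [hIdef]
        exact this
      have hTC : ∫⁻ y, ENNReal.ofReal ((2*b) * ‖ψ y‖^2) ∂volume
          = ENNReal.ofReal (2*b) * P := by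
        have hco : ∀ y, ENNReal.ofReal ((2*b) * ‖ψ y‖^2)
            = ENNReal.ofReal (2*b) * ENNReal.ofReal (‖ψ y‖^2) :=
          fun y => ENNReal.ofReal_mul (by positivity)
        simp_rw [hco]
        rw [lintegral_const_mul' _ _ ENNReal.ofReal_ne_top, hPdef]
      calc ∫⁻ y, ENNReal.ofReal (H y) ∂volume
          = ∫⁻ y, (ENNReal.ofReal (a * IND y)
            + (ENNReal.ofReal (b * ((F y)^2 * q y))
              + ENNReal.ofReal ((2*b) * ‖ψ y‖^2))) ∂volume := by simp_rw [hpt2]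
        _ = (∫⁻ y, ENNReal.ofReal (a * IND y) ∂volume)
            + ∫⁻ y, (ENNReal.ofReal (b * ((F y)^2 * q y))
              + ENNReal.ofReal ((2*b) * ‖ψ y‖^2)) ∂volume := lintegral_add_left hmeasA _
        _ = (∫⁻ y, ENNReal.ofReal (a * IND y) ∂volume)
            + ((∫⁻ y, ENNReal.ofReal (b * ((F y)^2 * q y)) ∂volume)
              + ∫⁻ y, ENNReal.ofReal ((2*b) * ‖ψ y‖^2) ∂volume) := by
            rw [lintegral_add_right' _ hmeasC]
        _ ≤ ENNReal.ofReal a * D1 + (ENNReal.ofReal b * D2 + ENNReal.ofReal (2*b) * P) := by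
            exact add_le_add hTA (add_le_add hTB hTC.le)
        _ = C0 := by rw [hC0def, add_assoc]
    calc (‖ψ x‖₊ : ℝ≥0∞)
        ≤ ∫⁻ y, (‖((negKernel lamj x y : ℝ) : ℂ)
            * (((V₁ y + V₂ y : ℝ) : ℂ) * ψ y)‖₊ : ℝ≥0∞) ∂volume := hx1
      _ ≤ ∫⁻ y, ENNReal.ofReal (Real.exp (-(ε*‖x‖)) * H y) ∂volume := lintegral_mono hpt
      _ = ENNReal.ofReal (Real.exp (-(ε*‖x‖))) * ∫⁻ y, ENNReal.ofReal (H y) ∂volume := hx3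
      _ ≤ ENNReal.ofReal (Real.exp (-(ε*‖x‖))) * C0 := mul_le_mul_right hsplit _
  -- conclusion
  have hC0ne : C0 ≠ ∞ := hC0.ne
  set M := C0.toReal with hMdef
  have hM0 : 0 ≤ M := ENNReal.toReal_nonneg
  have hbound : ∀ x, ‖ψ x‖ ≤ M * Real.exp (-(ε * ‖x‖)) := by
    intro x
    have h1 := main x
    rw [← enorm_eq_nnnorm, ← ofReal_norm] at h1
    have h2 : ENNReal.ofReal (Real.exp (-(ε*‖x‖))) * C0 ≠ ∞ :=
      ENNReal.mul_ne_top ENNReal.ofReal_ne_top hC0ne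
    have h3 := (ENNReal.ofReal_le_iff_le_toReal h2).1 h1
    rw [ENNReal.toReal_mul, ENNReal.toReal_ofReal (Real.exp_nonneg _)] at h3
    calc ‖ψ x‖ ≤ Real.exp (-(ε*‖x‖)) * M := h3
      _ = M * Real.exp (-(ε*‖x‖)) := mul_comm _ _
  refine ⟨⟨M, hbound⟩, ?_⟩
  intro p hp
  have hgcont : Continuous fun x : EuclideanSpace ℝ (Fin 3) => M * Real.exp (-(ε*‖x‖)) :=
    continuous_const.mul (Real.continuous_exp.comp ((continuous_const.mul continuous_norm).neg))
  have hgas : AEStronglyMeasurable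
      (fun x : EuclideanSpace ℝ (Fin 3) => M * Real.exp (-(ε*‖x‖))) volume :=
    hgcont.aestronglyMeasurable
  have hexple : ∀ x : EuclideanSpace ℝ (Fin 3), Real.exp (-(ε*‖x‖)) ≤ 1 := by
    intro x
    have h1 : Real.exp (-(ε*‖x‖)) ≤ Real.exp 0 := by
      apply Real.exp_le_exp.2
      have : (0:ℝ) ≤ ε * ‖x‖ := by positivity
      linarith
    rwa [Real.exp_zero] at h1
  have hgle : ∀ x : EuclideanSpace ℝ (Fin 3), ‖ψ x‖ ≤ ‖M * Real.exp (-(ε*‖x‖))‖ := by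
    intro x
    rw [Real.norm_eq_abs, _root_.abs_of_nonneg (by positivity)]
    exact hbound x
  have hg : MemLp (fun x : EuclideanSpace ℝ (Fin 3) => M * Real.exp (-(ε*‖x‖))) p volume := by
    by_cases hptop : p = ∞
    · rw [hptop]
      apply memLp_top_of_bound hgas M
      apply Filter.Eventually.of_forall
      intro x
      rw [Real.norm_eq_abs, _root_.abs_of_nonneg (by positivity)]
      nlinarith [hexple x, hM0, Real.exp_pos (-(ε*‖x‖))]
    · have hp0 : p ≠ 0 := (lt_of_lt_of_le zero_lt_one hp).ne'
      refine ⟨hgas, ?_⟩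
      rw [eLpNorm_eq_lintegral_rpow_enorm_toReal hp0 hptop]
      have hpt1 : 1 ≤ p.toReal := by
        rw [← ENNReal.toReal_one]
        exact ENNReal.toReal_mono hptop hp
      have hptnn : (0:ℝ) ≤ p.toReal := le_trans zero_le_one hpt1
      apply ENNReal.rpow_lt_top_of_nonneg (by positivity)
      have hintb : ∀ x : EuclideanSpace ℝ (Fin 3),
          (‖M * Real.exp (-(ε*‖x‖))‖₊ : ℝ≥0∞) ^ p.toReal
          ≤ ENNReal.ofReal ((max M 1)^p.toReal) * ENNReal.ofReal (Real.exp (-(ε*‖x‖))) := by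
        intro x
        rw [← enorm_eq_nnnorm, ← ofReal_norm, Real.norm_eq_abs,
          _root_.abs_of_nonneg (by positivity : (0:ℝ) ≤ M * Real.exp (-(ε*‖x‖))),
          ENNReal.ofReal_rpow_of_nonneg (by positivity) hptnn,
          ← ENNReal.ofReal_mul (by positivity)]
        apply ENNReal.ofReal_le_ofReal
        rw [Real.mul_rpow hM0 (Real.exp_nonneg _)]
        apply mul_le_mul
        · exact Real.rpow_le_rpow hM0 (le_max_left _ _) hptnn
        · calc (Real.exp (-(ε*‖x‖))) ^ p.toReal
              ≤ (Real.exp (-(ε*‖x‖))) ^ (1:ℝ) :=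
                Real.rpow_le_rpow_of_exponent_ge (Real.exp_pos _) (hexple x) hpt1
            _ = Real.exp (-(ε*‖x‖)) := Real.rpow_one _
        · positivity
        · positivity
      have hfin : ∫⁻ x : EuclideanSpace ℝ (Fin 3),
          (‖M * Real.exp (-(ε*‖x‖))‖₊ : ℝ≥0∞) ^ p.toReal ∂volume < ∞ := by
        calc ∫⁻ x : EuclideanSpace ℝ (Fin 3),
            (‖M * Real.exp (-(ε*‖x‖))‖₊ : ℝ≥0∞) ^ p.toReal ∂volume
            ≤ ∫⁻ x : EuclideanSpace ℝ (Fin 3), ENNReal.ofReal ((max M 1)^p.toReal)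
                * ENNReal.ofReal (Real.exp (-(ε*‖x‖))) ∂volume := lintegral_mono hintb
          _ = ENNReal.ofReal ((max M 1)^p.toReal)
              * ∫⁻ x : EuclideanSpace ℝ (Fin 3),
                  ENNReal.ofReal (Real.exp (-(ε*‖x‖))) ∂volume :=
              lintegral_const_mul' _ _ ENNReal.ofReal_ne_top
          _ < ∞ := ENNReal.mul_lt_top ENNReal.ofReal_lt_top (exp_decay_lintegral hε)
      exact hfin.ne
  exact MemLp.of_le hg hψ.1 (Filter.Eventually.of_forall hgle)
end
end
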